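/- Let n ≥ 2 and t > 0, and let E be a nonempty compact subset of the open unit ball of n-dimensional Euclidean space such that ρ(x,y) ≤ t for all x, y ∈ E, where ρ(x,y) = 2·arsinh(‖x−y‖/√((1−‖x‖²)(1−‖y‖²))) is the hyperbolic distance. Then there exists a point z with ‖z‖ < 1 such that ρ(z,x) ≤ arsinh(√(2n/(n+1))·sinh(t/2)) for every x ∈ E. -/

import Mathlib

open Real Finset

noncomputable section DeksterAux

variable {n : ℕ}

def mk' {n : ℕ} (v : ℝ × EuclideanSpace ℝ (Fin n)) :
    (ℝ × EuclideanSpace ℝ (Fin n)) →ₗ[ℝ] ℝ where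
  toFun u := inner ℝ u.2 v.2 - u.1 * v.1
  map_add' u u' := by
    rw [Prod.fst_add, Prod.snd_add, inner_add_left]; ring
  map_smul' c u := by
    rw [Prod.smul_fst, Prod.smul_snd, real_inner_smul_left, smul_eq_mul, smul_eq_mul,
      RingHom.id_apply]; ring

def mink {n : ℕ} (u v : ℝ × EuclideanSpace ℝ (Fin n)) : ℝ := mk' v u

lemma mink_def (u v : ℝ × EuclideanSpace ℝ (Fin n)) :
    mink u v = inner ℝ u.2 v.2 - u.1 * v.1 := rfl

lemma mink_comm (u v : ℝ × EuclideanSpace ℝ (Fin n)) : mink u v = mink v u := by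
  simp only [mink_def, real_inner_comm, mul_comm]

lemma mink_add_left (u u' v : ℝ × EuclideanSpace ℝ (Fin n)) :
    mink (u + u') v = mink u v + mink u' v := (mk' v).map_add u u'

lemma mink_smul_left (c : ℝ) (u v : ℝ × EuclideanSpace ℝ (Fin n)) :
    mink (c • u) v = c * mink u v := by
  show mk' v (c • u) = c * mk' v u
  rw [(mk' v).map_smul, smul_eq_mul]

lemma mink_sum_left {ι : Type*} (A : Finset ι) (w : ι → ℝ) (x : ι → ℝ × EuclideanSpace ℝ (Fin n))
    (v : ℝ × EuclideanSpace ℝ (Fin n)) :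
    mink (∑ i ∈ A, w i • x i) v = ∑ i ∈ A, w i * mink (x i) v := by
  show mk' v (∑ i ∈ A, w i • x i) = _
  rw [map_sum]
  exact Finset.sum_congr rfl fun i _ => by
    rw [(mk' v).map_smul, smul_eq_mul]; rfl

lemma mink_sum_right {ι : Type*} (A : Finset ι) (w : ι → ℝ) (x : ι → ℝ × EuclideanSpace ℝ (Fin n))
    (v : ℝ × EuclideanSpace ℝ (Fin n)) :
    mink v (∑ i ∈ A, w i • x i) = ∑ i ∈ A, w i * mink v (x i) := by
  rw [mink_comm, mink_sum_left]
  exact Finset.sum_congr rfl fun i _ => by rw [mink_comm]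

lemma mink_sum_sum {ι κ : Type*} (A : Finset ι) (B : Finset κ) (w : ι → ℝ) (u : κ → ℝ)
    (x : ι → ℝ × EuclideanSpace ℝ (Fin n)) (y : κ → ℝ × EuclideanSpace ℝ (Fin n)) :
    mink (∑ i ∈ A, w i • x i) (∑ j ∈ B, u j • y j)
      = ∑ i ∈ A, ∑ j ∈ B, w i * u j * mink (x i) (y j) := by
  rw [mink_sum_left]
  exact Finset.sum_congr rfl fun i _ => by
    rw [mink_sum_right, Finset.mul_sum]
    exact Finset.sum_congr rfl fun j _ => by ring

lemma mink_combo (a b : ℝ) (u v : ℝ × EuclideanSpace ℝ (Fin n)) :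
    mink (a • u + b • v) (a • u + b • v)
      = a ^ 2 * mink u u + 2 * a * b * mink u v + b ^ 2 * mink v v := by
  rw [mink_add_left, mink_smul_left, mink_smul_left, mink_comm u (a • u + b • v),
    mink_comm v (a • u + b • v), mink_add_left, mink_add_left, mink_smul_left, mink_smul_left,
    mink_smul_left, mink_smul_left, mink_comm v u]
  ring


/-- The lift from the Poincaré ball to the hyperboloid. -/
def plift {n : ℕ} (x : EuclideanSpace ℝ (Fin n)) : ℝ × EuclideanSpace ℝ (Fin n) :=
  ((1 + ‖x‖ ^ 2) / (1 - ‖x‖ ^ 2), (2 / (1 - ‖x‖ ^ 2)) • x)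

lemma one_sub_sq_pos {x : EuclideanSpace ℝ (Fin n)} (hx : ‖x‖ < 1) : 0 < 1 - ‖x‖ ^ 2 := by
  nlinarith [norm_nonneg x]

lemma mink_plift {x y : EuclideanSpace ℝ (Fin n)} (hx : ‖x‖ < 1) (hy : ‖y‖ < 1) :
    mink (plift x) (plift y)
      = -(1 + 2 * ‖x - y‖ ^ 2 / ((1 - ‖x‖ ^ 2) * (1 - ‖y‖ ^ 2))) := by
  have hax := one_sub_sq_pos hx
  have hay := one_sub_sq_pos hy
  have hns : ‖x - y‖ ^ 2 = ‖x‖ ^ 2 - 2 * (inner ℝ x y : ℝ) + ‖y‖ ^ 2 := by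
    rw [@norm_sub_sq_real]
  rw [mink_def, plift, plift]
  simp only [real_inner_smul_left, real_inner_smul_right, hns]
  field_simp
  ring

lemma plift_fst {x : EuclideanSpace ℝ (Fin n)} (hx : ‖x‖ < 1) : 1 ≤ (plift x).1 := by
  have hax := one_sub_sq_pos hx
  rw [plift]
  rw [le_div_iff₀ hax]
  nlinarith [sq_nonneg ‖x‖]

theorem pad_convexHull {V : Type*} [NormedAddCommGroup V] [NormedSpace ℝ V]
    [FiniteDimensional ℝ V] {S : Set V} {v : V} {N : ℕ}
    (hN : Module.finrank ℝ V + 1 ≤ N) (hv : v ∈ convexHull ℝ S) :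
    ∃ (w : Fin N → ℝ) (x : Fin N → V),
      (∀ i, 0 ≤ w i) ∧ ∑ i, w i = 1 ∧ (∀ i, x i ∈ S) ∧ ∑ i, w i • x i = v := by
  classical
  obtain ⟨ι, hfin, z, w, hzr, hai, hw0, hw1, hsum⟩ := eq_pos_convex_span_of_mem_convexHull hv
  letI := hfin
  have hne : Nonempty ι := by
    rcases isEmpty_or_nonempty ι with h | h
    · rw [Finset.univ_eq_empty, Finset.sum_empty] at hw1; norm_num at hw1
    · exact h
  inhabit ι
  have hcard : Fintype.card ι ≤ N := by
    have h2 := hai.finrank_vectorSpan_add_one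
    have h3 : Module.finrank ℝ (vectorSpan ℝ (Set.range z)) ≤ Module.finrank ℝ V :=
      Submodule.finrank_le _
    omega
  obtain ⟨e⟩ : Nonempty (ι ↪ Fin N) :=
    Function.Embedding.nonempty_of_card_le (by simpa using hcard)
  refine ⟨fun j => ∑ i, if e i = j then w i else 0,
      fun j => if h : ∃ i, e i = j then z h.choose else z default, ?_, ?_, ?_, ?_⟩
  · intro j
    apply Finset.sum_nonneg
    intro i _
    split
    · exact (hw0 i).le
    · exact le_rfl
  · rw [Finset.sum_comm]
    rw [← hw1]
    refine Finset.sum_congr rfl fun i _ => ?_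
    simp [Finset.sum_ite_eq]
  · intro j
    dsimp only
    split
    · exact hzr ⟨_, rfl⟩
    · exact hzr ⟨_, rfl⟩
  · have key : ∀ i : ι,
        (∑ j, if e i = j then (w i • (if h : ∃ i', e i' = j then z h.choose else z default)) else 0)
          = w i • z i := by
      intro i
      rw [Finset.sum_ite_eq]
      simp only [Finset.mem_univ, if_true]
      have h : ∃ i', e i' = e i := ⟨i, rfl⟩
      rw [dif_pos h]
      congr 1
      exact congrArg z (e.injective h.choose_spec)
    calc ∑ j, (∑ i, if e i = j then w i else 0) •
            (if h : ∃ i', e i' = j then z h.choose else z default)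
        = ∑ j, ∑ i, (if e i = j then
            (w i • (if h : ∃ i', e i' = j then z h.choose else z default)) else 0) := by
          refine Finset.sum_congr rfl fun j _ => ?_
          rw [Finset.sum_smul]
          refine Finset.sum_congr rfl fun i _ => ?_
          split <;> simp
      _ = ∑ i, ∑ j, (if e i = j then
            (w i • (if h : ∃ i', e i' = j then z h.choose else z default)) else 0) :=
          Finset.sum_comm
      _ = ∑ i, w i • z i := Finset.sum_congr rfl fun i _ => key i
      _ = v := hsum

set_option maxHeartbeats 1600000 in
/-- Existence of a good circumcenter on the hyperboloid. -/
theorem exists_center {n : ℕ} (s : ℝ) {S : Set (ℝ × EuclideanSpace ℝ (Fin n))}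
    (hSne : S.Nonempty) (hScomp : IsCompact S)
    (hS2 : ∀ X ∈ S, 1 ≤ X.1)
    (hSself : ∀ X ∈ S, mink X X = -1)
    (hSle : ∀ X ∈ S, ∀ Y ∈ S, mink X Y ≤ -1)
    (hSge : ∀ X ∈ S, ∀ Y ∈ S, -(1 + 2 * s ^ 2) ≤ mink X Y) :
    ∃ m : ℝ × EuclideanSpace ℝ (Fin n), 1 ≤ m.1 ∧ 1 ≤ -mink m m ∧
      -mink m m ≤ 1 + 2 * s ^ 2 * n / (n + 1) ∧ ∀ X ∈ S, -mink m X ≤ -mink m m := by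
  classical
  have hfr : Module.finrank ℝ (ℝ × EuclideanSpace ℝ (Fin n)) = n + 1 := by
    rw [Module.finrank_prod, finrank_euclideanSpace_fin, Module.finrank_self]
    omega
  set D : Set ((Fin (n + 2) → ℝ) × (Fin (n + 2) → ℝ × EuclideanSpace ℝ (Fin n))) :=
    (stdSimplex ℝ (Fin (n + 2))) ×ˢ (Set.univ.pi fun _ => S) with hD
  set T : ((Fin (n + 2) → ℝ) × (Fin (n + 2) → ℝ × EuclideanSpace ℝ (Fin n))) →
      ℝ × EuclideanSpace ℝ (Fin n) := fun p => ∑ i, p.1 i • p.2 i with hT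
  have hTcont : Continuous T :=
    continuous_finset_sum _ fun i _ =>
      ((continuous_apply i).comp continuous_fst).smul ((continuous_apply i).comp continuous_snd)
  have hfcont : Continuous fun p => mink (T p) (T p) := by
    simp only [mink_def]
    exact (Continuous.inner (continuous_snd.comp hTcont) (continuous_snd.comp hTcont)).sub
      ((continuous_fst.comp hTcont).mul (continuous_fst.comp hTcont))
  obtain ⟨X₀, hX₀⟩ := hSne
  have hp₀ : ((fun _ => ((n : ℝ) + 2)⁻¹, fun _ => X₀) :
      (Fin (n + 2) → ℝ) × (Fin (n + 2) → ℝ × EuclideanSpace ℝ (Fin n))) ∈ D := by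
    constructor
    · constructor
      · intro i; positivity
      · rw [Finset.sum_const, Finset.card_univ, Fintype.card_fin, nsmul_eq_mul]
        have : ((n : ℝ) + 2) ≠ 0 := by positivity
        push_cast
        field_simp
    · intro i _; exact hX₀
  have hDcomp : IsCompact D :=
    (isCompact_stdSimplex _ _).prod (isCompact_univ_pi fun _ => hScomp)
  obtain ⟨pstar, hpD, hmin⟩ :=
    hDcomp.exists_isMinOn ⟨_, hp₀⟩ hfcont.continuousOn
  set m := T pstar with hm
  have hw0 : ∀ i, 0 ≤ pstar.1 i := hpD.1.1
  have hw1 : ∑ i, pstar.1 i = 1 := hpD.1.2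
  have hxS : ∀ i, pstar.2 i ∈ S := fun i => hpD.2 i (Set.mem_univ i)
  -- m is in the convex hull of S
  have hmhull : m ∈ convexHull ℝ S := by
    have h := Finset.univ.centerMass_mem_convexHull (w := pstar.1) (z := pstar.2)
      (fun i _ => hw0 i) (by rw [hw1]; exact one_pos) (fun i _ => hxS i)
    rwa [Finset.centerMass_eq_of_sum_1 _ _ hw1] at h
  -- minimality over the whole hull
  have hminhull : ∀ v ∈ convexHull ℝ S, mink m m ≤ mink v v := by
    intro v hv
    obtain ⟨w, x, h0, h1, hS', hsum⟩ :=
      pad_convexHull (N := n + 2) (by rw [hfr]) hv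
    have hmem : (w, x) ∈ D := ⟨⟨h0, h1⟩, fun i _ => hS' i⟩
    have h : mink (T pstar) (T pstar) ≤ mink (T (w, x)) (T (w, x)) := hmin hmem
    have hTwx : T (w, x) = v := hsum
    rw [hTwx] at h
    exact h
  -- first-order condition
  have h5 : ∀ X ∈ S, mink m m ≤ mink m X := by
    intro X hX
    by_contra hlt
    push_neg at hlt
    set d := mink m m - mink m X with hd
    have hd0 : 0 < d := by simp only [hd]; linarith
    set C := mink m m - 2 * mink m X + mink X X with hC
    have hC1 : 0 < |C| + 1 := by positivity
    set ε := min 1 (d / (|C| + 1)) with hε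
    have hε0 : 0 < ε := lt_min one_pos (div_pos hd0 hC1)
    have hε1 : ε ≤ 1 := min_le_left _ _
    have hεd : ε * (|C| + 1) ≤ d := by
      calc ε * (|C| + 1) ≤ (d / (|C| + 1)) * (|C| + 1) :=
            mul_le_mul_of_nonneg_right (min_le_right _ _) hC1.le
        _ = d := by field_simp
    have hvhull : (1 - ε) • m + ε • X ∈ convexHull ℝ S :=
      (convex_convexHull ℝ S) hmhull (subset_convexHull ℝ S hX)
        (by linarith) hε0.le (by ring)
    have hge := hminhull _ hvhull
    rw [mink_combo] at hge
    have hge' : mink m m ≤ mink m m + ε * (-2 * d + ε * C) := by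
      calc mink m m ≤ (1 - ε) ^ 2 * mink m m + 2 * (1 - ε) * ε * mink m X
            + ε ^ 2 * mink X X := hge
        _ = mink m m + ε * (-2 * d + ε * C) := by simp only [hd, hC]; ring
    have h2 : 0 ≤ -2 * d + ε * C := by
      have h3 : 0 ≤ ε * (-2 * d + ε * C) := by linarith
      exact (mul_nonneg_iff_of_pos_left hε0).mp h3
    have h3 : ε * C ≤ d := by
      calc ε * C ≤ ε * |C| := mul_le_mul_of_nonneg_left (le_abs_self C) hε0.le
        _ ≤ ε * (|C| + 1) := by nlinarith
        _ ≤ d := hεd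
    linarith
  -- expansion of mink m m as a double sum
  have hmsum : m = ∑ i, pstar.1 i • pstar.2 i := hm
  have hexp0 : mink m m = ∑ i, ∑ j, pstar.1 i * pstar.1 j * mink (pstar.2 i) (pstar.2 j) := by
    conv_lhs => rw [hmsum]
    rw [mink_sum_sum]
  -- mink m m ≤ -1
  have hmm_le : mink m m ≤ -1 := by
    rw [hexp0]
    calc ∑ i, ∑ j, pstar.1 i * pstar.1 j * mink (pstar.2 i) (pstar.2 j)
        ≤ ∑ i, ∑ j, pstar.1 i * pstar.1 j * (-1) := by
          refine Finset.sum_le_sum fun i _ => Finset.sum_le_sum fun j _ => ?_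
          exact mul_le_mul_of_nonneg_left (hSle _ (hxS i) _ (hxS j))
            (mul_nonneg (hw0 i) (hw0 j))
      _ = -1 := by
          simp only [mul_neg, mul_one, Finset.sum_neg_distrib]
          rw [← Finset.sum_mul_sum, hw1]
          norm_num
  have hq1 : 1 ≤ -mink m m := by linarith
  -- touching points
  have htouch : ∀ i, 0 < pstar.1 i → mink m (pstar.2 i) = mink m m := by
    have hrep : mink m m = ∑ j, pstar.1 j * mink m (pstar.2 j) := by
      conv_lhs => rw [show mink m m = mink m (∑ i, pstar.1 i • pstar.2 i) by rw [← hmsum]]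
      rw [mink_sum_right]
    have hzero : ∑ j, pstar.1 j * (mink m (pstar.2 j) - mink m m) = 0 := by
      simp only [mul_sub]
      rw [Finset.sum_sub_distrib, ← Finset.sum_mul, hw1, ← hrep]
      ring
    have hterm := (Finset.sum_eq_zero_iff_of_nonneg
      (fun j _ => mul_nonneg (hw0 j) (by have := h5 _ (hxS j); linarith))).mp hzero
    intro i hi
    have h := hterm i (Finset.mem_univ i)
    rcases mul_eq_zero.mp h with h' | h'
    · linarith
    · linarith
  -- the finite set of touching points
  set t' : Finset (ℝ × EuclideanSpace ℝ (Fin n)) :=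
    (Finset.univ.filter fun i => 0 < pstar.1 i).image pstar.2 with ht'
  have hsum_filter : ∑ i ∈ Finset.univ.filter fun i => 0 < pstar.1 i, pstar.1 i = 1 := by
    rw [← hw1]
    apply Finset.sum_subset (Finset.filter_subset _ _)
    intro i _ hni
    simp only [Finset.mem_filter, Finset.mem_univ, true_and, not_lt] at hni
    linarith [hw0 i]
  have hsum_eq : ∑ i ∈ Finset.univ.filter fun i => 0 < pstar.1 i,
      pstar.1 i • pstar.2 i = m := by
    rw [hmsum]
    apply Finset.sum_subset (Finset.filter_subset _ _)
    intro i _ hni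
    simp only [Finset.mem_filter, Finset.mem_univ, true_and, not_lt] at hni
    have : pstar.1 i = 0 := le_antisymm hni (hw0 i)
    rw [this, zero_smul]
  have hmt' : m ∈ convexHull ℝ (↑t' : Set (ℝ × EuclideanSpace ℝ (Fin n))) := by
    have hcm := Finset.centerMass_mem_convexHull
      (Finset.univ.filter fun i => 0 < pstar.1 i) (w := pstar.1) (z := pstar.2)
      (fun i _ => hw0 i) (by rw [hsum_filter]; exact one_pos)
      (fun i hi => Finset.mem_coe.mpr (Finset.mem_image_of_mem _ hi))
    rwa [Finset.centerMass_eq_of_sum_1 _ _ hsum_filter, hsum_eq] at hcm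
  rw [convexHull_eq_union] at hmt'
  simp only [Set.mem_iUnion] at hmt'
  obtain ⟨u, hu_sub, hu_ai, hmu⟩ := hmt'
  -- elements of u are touching points in S
  have huS : ∀ y ∈ u, y ∈ S ∧ mink m y = mink m m := by
    intro y hy
    have hyt : y ∈ t' := hu_sub hy
    obtain ⟨i, hi, rfl⟩ := Finset.mem_image.mp hyt
    have hi' := (Finset.mem_filter.mp hi).2
    exact ⟨hxS i, htouch i hi'⟩
  -- u is contained in a hyperplane through m, so card u ≤ n + 1
  have hune : u.Nonempty := by
    rcases u.eq_empty_or_nonempty with rfl | h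
    · simp only [Finset.coe_empty, convexHull_empty] at hmu
      exact absurd hmu (Set.notMem_empty m)
    · exact h
  have hker : vectorSpan ℝ (↑u : Set (ℝ × EuclideanSpace ℝ (Fin n)))
      ≤ LinearMap.ker (mk' m) := by
    rw [vectorSpan_def, Submodule.span_le]
    rintro w hw
    rw [Set.mem_vsub] at hw
    obtain ⟨y₁, hy₁, y₂, hy₂, rfl⟩ := hw
    have h1 : mink y₁ m = mink m m := by
      rw [mink_comm]; exact (huS y₁ (Finset.mem_coe.mp hy₁)).2
    have h2 : mink y₂ m = mink m m := by
      rw [mink_comm]; exact (huS y₂ (Finset.mem_coe.mp hy₂)).2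
    have : mk' m (y₁ -ᵥ y₂) = 0 := by
      rw [vsub_eq_sub, map_sub]
      show mink y₁ m - mink y₂ m = 0
      rw [h1, h2, sub_self]
    exact LinearMap.mem_ker.mpr this
  have hker_ne_top : LinearMap.ker (mk' m) ≠ ⊤ := by
    intro hh
    have : mk' m m = 0 := by
      have : m ∈ LinearMap.ker (mk' m) := by rw [hh]; trivial
      exact LinearMap.mem_ker.mp this
    have : mink m m = 0 := this
    linarith
  have hcard : u.card ≤ n + 1 := by
    haveI : Nonempty ↥u := Finset.nonempty_coe_sort.mpr hune
    have h1 := hu_ai.finrank_vectorSpan_add_one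
    rw [Fintype.card_coe] at h1
    have hker' : vectorSpan ℝ (Set.range (Subtype.val : ↥u → ℝ × EuclideanSpace ℝ (Fin n)))
        ≤ LinearMap.ker (mk' m) := by rw [Subtype.range_coe]; exact hker
    have h2 := Submodule.finrank_mono hker'
    have h3 : Module.finrank ℝ (LinearMap.ker (mk' m))
        < Module.finrank ℝ (ℝ × EuclideanSpace ℝ (Fin n)) :=
      Submodule.finrank_lt hker_ne_top
    rw [hfr] at h3
    omega
  -- convex weights on u
  rw [Finset.convexHull_eq] at hmu
  obtain ⟨w', hw'0, hw'1, hw'cm⟩ := hmu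
  have hw'sum : ∑ y ∈ u, w' y • y = m := by
    rw [← hw'cm, Finset.centerMass_eq_of_sum_1 _ _ hw'1]
    simp only [id]
  -- sum of squares lower bound
  have hsq : 1 ≤ ((n : ℝ) + 1) * ∑ y ∈ u, (w' y) ^ 2 := by
    have hcs := sq_sum_le_card_mul_sum_sq (s := u) (f := w')
    rw [hw'1] at hcs
    have hcr : (u.card : ℝ) ≤ (n : ℝ) + 1 := by exact_mod_cast hcard
    have hpos : 0 ≤ ∑ y ∈ u, (w' y) ^ 2 := by positivity
    nlinarith
  -- the key lower bound on mink m m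
  have hexp : mink m m = ∑ y ∈ u, ∑ y' ∈ u, w' y * w' y' * mink y y' := by
    conv_lhs => rw [← hw'sum]
    exact mink_sum_sum u u w' w' id id
  have hy_bound : ∀ y ∈ u, -(1 + 2 * s ^ 2) * w' y + 2 * s ^ 2 * (w' y) ^ 2
      ≤ ∑ y' ∈ u, w' y * w' y' * mink y y' := by
    intro y hy
    have hyS := (huS y hy).1
    have hself : mink y y = -1 := hSself y hyS
    have hsum_erase : ∑ y' ∈ u.erase y, w' y' = 1 - w' y := by
      have h := Finset.add_sum_erase u w' hy
      rw [hw'1] at h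
      linarith
    have herase : ∑ y' ∈ u.erase y, w' y * w' y' * (-(1 + 2 * s ^ 2))
        ≤ ∑ y' ∈ u.erase y, w' y * w' y' * mink y y' := by
      refine Finset.sum_le_sum fun y' hy' => ?_
      have hy'S := (huS y' (Finset.mem_of_mem_erase hy')).1
      exact mul_le_mul_of_nonneg_left (hSge _ hyS _ hy'S)
        (mul_nonneg (hw'0 y hy) (hw'0 y' (Finset.mem_of_mem_erase hy')))
    have hfac : ∑ y' ∈ u.erase y, w' y * w' y' * (-(1 + 2 * s ^ 2))
        = w' y * (1 - w' y) * (-(1 + 2 * s ^ 2)) := by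
      rw [← Finset.sum_mul, ← Finset.mul_sum, hsum_erase]
    calc -(1 + 2 * s ^ 2) * w' y + 2 * s ^ 2 * (w' y) ^ 2
        = w' y * w' y * mink y y + w' y * (1 - w' y) * (-(1 + 2 * s ^ 2)) := by
          rw [hself]; ring
      _ ≤ w' y * w' y * mink y y + ∑ y' ∈ u.erase y, w' y * w' y' * mink y y' := by
          rw [← hfac]
          exact add_le_add_right herase _
      _ = ∑ y' ∈ u, w' y * w' y' * mink y y' :=
          Finset.add_sum_erase u (fun y' => w' y * w' y' * mink y y') hy
  have hkey : -(1 + 2 * s ^ 2) + 2 * s ^ 2 * ∑ y ∈ u, (w' y) ^ 2 ≤ mink m m := by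
    calc -(1 + 2 * s ^ 2) + 2 * s ^ 2 * ∑ y ∈ u, (w' y) ^ 2
        = ∑ y ∈ u, (-(1 + 2 * s ^ 2) * w' y + 2 * s ^ 2 * (w' y) ^ 2) := by
          rw [Finset.sum_add_distrib]
          rw [show (∑ y ∈ u, -(1 + 2 * s ^ 2) * w' y)
            = -(1 + 2 * s ^ 2) * ∑ y ∈ u, w' y from (Finset.mul_sum _ _ _).symm]
          rw [show (∑ y ∈ u, 2 * s ^ 2 * (w' y) ^ 2)
            = 2 * s ^ 2 * ∑ y ∈ u, (w' y) ^ 2 from (Finset.mul_sum _ _ _).symm]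
          rw [hw'1, mul_one]
      _ ≤ ∑ y ∈ u, ∑ y' ∈ u, w' y * w' y' * mink y y' := Finset.sum_le_sum hy_bound
      _ = mink m m := hexp.symm
  -- final numeric bound
  have hn1 : (0 : ℝ) < (n : ℝ) + 1 := by positivity
  have hSig : (1 : ℝ) / ((n : ℝ) + 1) ≤ ∑ y ∈ u, (w' y) ^ 2 := by
    rw [div_le_iff₀ hn1]
    linarith [hsq]
  have hqle : -mink m m ≤ 1 + 2 * s ^ 2 * n / (n + 1) := by
    have hs2 : (0 : ℝ) ≤ 2 * s ^ 2 := by positivity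
    have h1 : -mink m m ≤ 1 + 2 * s ^ 2 - 2 * s ^ 2 * ∑ y ∈ u, (w' y) ^ 2 := by linarith
    have h2 : 2 * s ^ 2 * (1 / ((n : ℝ) + 1)) ≤ 2 * s ^ 2 * ∑ y ∈ u, (w' y) ^ 2 :=
      mul_le_mul_of_nonneg_left hSig hs2
    have h3 : (1 : ℝ) + 2 * s ^ 2 - 2 * s ^ 2 * (1 / ((n : ℝ) + 1))
        = 1 + 2 * s ^ 2 * (n : ℝ) / ((n : ℝ) + 1) := by
      field_simp
      ring
    linarith
  -- m.1 ≥ 1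
  have hm1 : 1 ≤ m.1 := by
    have : m.1 = ∑ i, pstar.1 i * (pstar.2 i).1 := by
      rw [hmsum, Prod.fst_sum]
      exact Finset.sum_congr rfl fun i _ => by rw [Prod.smul_fst, smul_eq_mul]
    rw [this, ← hw1]
    refine Finset.sum_le_sum fun i _ => ?_
    have := hS2 _ (hxS i)
    nlinarith [hw0 i]
  exact ⟨m, hm1, hq1, hqle, fun X hX => by linarith [h5 X hX]⟩

lemma plift_eq (x : EuclideanSpace ℝ (Fin n)) :
    plift x = ((1 + ‖x‖ ^ 2) / (1 - ‖x‖ ^ 2), (2 / (1 - ‖x‖ ^ 2)) • x) := rfl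

set_option maxHeartbeats 1600000 in
/-- Dekster's hyperbolic Jung theorem: if `E` is a nonempty compact subset of the open
unit ball of `ℝⁿ` (`n ≥ 2`) of hyperbolic diameter at most `t`, then `E` is contained
in a closed hyperbolic ball of radius `arsinh (√(2n/(n+1)) · sinh (t/2))`, where the
hyperbolic distance is `ρ(x,y) = 2 · arsinh (‖x - y‖ / √((1 - ‖x‖²)(1 - ‖y‖²)))`. -/
theorem dekster_hyperbolic_jung (n : ℕ) (hn : 2 ≤ n) (t : ℝ) (ht : 0 < t)
    (E : Set (EuclideanSpace ℝ (Fin n))) (hEne : E.Nonempty) (hEcomp : IsCompact E)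
    (hEsub : ∀ x ∈ E, ‖x‖ < 1)
    (hdiam : ∀ x ∈ E, ∀ y ∈ E,
      2 * Real.arsinh (‖x - y‖ / Real.sqrt ((1 - ‖x‖ ^ 2) * (1 - ‖y‖ ^ 2))) ≤ t) :
    ∃ z : EuclideanSpace ℝ (Fin n), ‖z‖ < 1 ∧ ∀ x ∈ E,
      2 * Real.arsinh (‖z - x‖ / Real.sqrt ((1 - ‖z‖ ^ 2) * (1 - ‖x‖ ^ 2))) ≤
        Real.arsinh (Real.sqrt (2 * n / (n + 1)) * Real.sinh (t / 2)) := by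
  classical
  have hs0 : 0 ≤ Real.sinh (t / 2) := Real.sinh_nonneg_iff.mpr (by linarith)
  set s := Real.sinh (t / 2) with hs
  set S : Set (ℝ × EuclideanSpace ℝ (Fin n)) := plift '' E with hSdef
  have hcont : ContinuousOn (plift (n := n)) E := by
    have h1 : ContinuousOn (fun x : EuclideanSpace ℝ (Fin n) =>
        (1 + ‖x‖ ^ 2) / (1 - ‖x‖ ^ 2)) E := by
      apply ContinuousOn.div
      · exact (continuous_const.add (continuous_norm.pow 2)).continuousOn
      · exact (continuous_const.sub (continuous_norm.pow 2)).continuousOn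
      · intro x hx; exact (one_sub_sq_pos (hEsub x hx)).ne'
    have h2 : ContinuousOn (fun x : EuclideanSpace ℝ (Fin n) =>
        ((2 / (1 - ‖x‖ ^ 2)) • x : EuclideanSpace ℝ (Fin n))) E := by
      apply ContinuousOn.fun_smul
      · apply ContinuousOn.div
        · exact continuousOn_const
        · exact (continuous_const.sub (continuous_norm.pow 2)).continuousOn
        · intro x hx; exact (one_sub_sq_pos (hEsub x hx)).ne'
      · exact continuousOn_id
    exact h1.prodMk h2
  have hSne : S.Nonempty := hEne.image _
  have hScomp : IsCompact S := hEcomp.image_of_continuousOn hcont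
  have hS2 : ∀ X ∈ S, 1 ≤ X.1 := by
    rintro X ⟨x, hx, rfl⟩; exact plift_fst (hEsub x hx)
  have key : ∀ x ∈ E, ∀ y ∈ E, mink (plift x) (plift y)
      = -(1 + 2 * ‖x - y‖ ^ 2 / ((1 - ‖x‖ ^ 2) * (1 - ‖y‖ ^ 2))) :=
    fun x hx y hy => mink_plift (hEsub x hx) (hEsub y hy)
  have hSself : ∀ X ∈ S, mink X X = -1 := by
    rintro X ⟨x, hx, rfl⟩
    rw [key x hx x hx]
    simp
  have hSle : ∀ X ∈ S, ∀ Y ∈ S, mink X Y ≤ -1 := by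
    rintro X ⟨x, hx, rfl⟩ Y ⟨y, hy, rfl⟩
    rw [key x hx y hy]
    have hprod : 0 < (1 - ‖x‖ ^ 2) * (1 - ‖y‖ ^ 2) :=
      mul_pos (one_sub_sq_pos (hEsub x hx)) (one_sub_sq_pos (hEsub y hy))
    have : 0 ≤ 2 * ‖x - y‖ ^ 2 / ((1 - ‖x‖ ^ 2) * (1 - ‖y‖ ^ 2)) :=
      div_nonneg (by positivity) hprod.le
    linarith
  have hSge : ∀ X ∈ S, ∀ Y ∈ S, -(1 + 2 * s ^ 2) ≤ mink X Y := by
    rintro X ⟨x, hx, rfl⟩ Y ⟨y, hy, rfl⟩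
    rw [key x hx y hy]
    have hprod : 0 < (1 - ‖x‖ ^ 2) * (1 - ‖y‖ ^ 2) :=
      mul_pos (one_sub_sq_pos (hEsub x hx)) (one_sub_sq_pos (hEsub y hy))
    have hd := hdiam x hx y hy
    have harsinh : Real.arsinh (‖x - y‖ / Real.sqrt ((1 - ‖x‖ ^ 2) * (1 - ‖y‖ ^ 2))) ≤ t / 2 := by
      linarith
    have hle : ‖x - y‖ / Real.sqrt ((1 - ‖x‖ ^ 2) * (1 - ‖y‖ ^ 2)) ≤ s := by
      have h := Real.sinh_le_sinh.mpr harsinh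
      rwa [Real.sinh_arsinh] at h
    have hnn : 0 ≤ ‖x - y‖ / Real.sqrt ((1 - ‖x‖ ^ 2) * (1 - ‖y‖ ^ 2)) :=
      div_nonneg (norm_nonneg _) (Real.sqrt_nonneg _)
    have hsq : ‖x - y‖ ^ 2 / ((1 - ‖x‖ ^ 2) * (1 - ‖y‖ ^ 2)) ≤ s ^ 2 := by
      have h1 : (‖x - y‖ / Real.sqrt ((1 - ‖x‖ ^ 2) * (1 - ‖y‖ ^ 2))) ^ 2
          = ‖x - y‖ ^ 2 / ((1 - ‖x‖ ^ 2) * (1 - ‖y‖ ^ 2)) := by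
        rw [div_pow, Real.sq_sqrt hprod.le]
      rw [← h1]
      exact pow_le_pow_left₀ hnn hle 2
    have hmda : 2 * ‖x - y‖ ^ 2 / ((1 - ‖x‖ ^ 2) * (1 - ‖y‖ ^ 2))
        = 2 * (‖x - y‖ ^ 2 / ((1 - ‖x‖ ^ 2) * (1 - ‖y‖ ^ 2))) := mul_div_assoc 2 _ _
    linarith
  obtain ⟨m, hm1, hq1, hqle, hbound⟩ := exists_center s hSne hScomp hS2 hSself hSle hSge
  set q := -mink m m with hq
  have hq0 : 0 < q := by linarith
  set r := Real.sqrt q with hr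
  have hr1 : 1 ≤ r := by
    rw [hr, show (1 : ℝ) = Real.sqrt 1 by simp]
    exact Real.sqrt_le_sqrt hq1
  have hr0 : 0 < r := by linarith
  have hrsq : r ^ 2 = q := Real.sq_sqrt hq0.le
  have hm2 : ‖m.2‖ ^ 2 = m.1 ^ 2 - q := by
    have h1 : mink m m = -q := by rw [hq]; ring
    rw [mink_def] at h1
    have h2 : (inner ℝ m.2 m.2 : ℝ) = ‖m.2‖ ^ 2 := real_inner_self_eq_norm_sq m.2
    nlinarith [h1, h2]
  have hrm1 : r ≤ m.1 := by
    have h1 : q ≤ m.1 ^ 2 := by nlinarith [sq_nonneg ‖m.2‖]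
    calc r = Real.sqrt q := rfl
      _ ≤ Real.sqrt (m.1 ^ 2) := Real.sqrt_le_sqrt h1
      _ = m.1 := Real.sqrt_sq (by linarith)
  have hden : 0 < m.1 + r := by linarith
  set z : EuclideanSpace ℝ (Fin n) := (m.1 + r)⁻¹ • m.2 with hzdef
  have hznorm : ‖z‖ ^ 2 = (m.1 - r) / (m.1 + r) := by
    rw [hzdef, norm_smul, Real.norm_eq_abs, abs_of_pos (inv_pos.mpr hden), mul_pow, hm2,
      show m.1 ^ 2 - q = (m.1 - r) * (m.1 + r) by rw [← hrsq]; ring]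
    field_simp
  have hz1 : ‖z‖ < 1 := by
    have hlt : (m.1 - r) / (m.1 + r) < 1 := by
      rw [div_lt_one hden]; linarith
    nlinarith [norm_nonneg z, hznorm]
  have hzA : 1 - ‖z‖ ^ 2 = 2 * r / (m.1 + r) := by
    rw [hznorm]; field_simp; ring
  have hliftz : plift z = r⁻¹ • m := by
    rw [plift_eq]
    have h2' : 1 + ‖z‖ ^ 2 = 2 * m.1 / (m.1 + r) := by rw [hznorm]; field_simp; ring
    have hfst : (1 + ‖z‖ ^ 2) / (1 - ‖z‖ ^ 2) = r⁻¹ * m.1 := by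
      rw [h2', hzA]
      field_simp
    have hsnd : (2 / (1 - ‖z‖ ^ 2)) • z = (r⁻¹ : ℝ) • m.2 := by
      rw [hzA, hzdef, smul_smul]
      congr 1
      field_simp
    rw [hfst, hsnd]
    rfl
  refine ⟨z, hz1, ?_⟩
  intro x hx
  have hX : plift x ∈ S := ⟨x, hx, rfl⟩
  have hb := hbound _ hX
  have hineq : -(mink (plift z) (plift x)) ≤ r := by
    rw [hliftz, mink_smul_left, show -(r⁻¹ * mink m (plift x)) = r⁻¹ * -(mink m (plift x)) by ring]
    calc r⁻¹ * -(mink m (plift x)) ≤ r⁻¹ * q :=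
          mul_le_mul_of_nonneg_left (by rw [hq] at hb ⊢; exact hb) (inv_nonneg.mpr hr0.le)
      _ = r := by rw [← hrsq]; field_simp
  rw [mink_plift hz1 (hEsub x hx), neg_neg] at hineq
  set A := (1 - ‖z‖ ^ 2) * (1 - ‖x‖ ^ 2) with hA
  have hApos : 0 < A := mul_pos (one_sub_sq_pos hz1) (one_sub_sq_pos (hEsub x hx))
  set u0 := ‖z - x‖ / Real.sqrt A with hu0
  have hu0nn : 0 ≤ u0 := div_nonneg (norm_nonneg _) (Real.sqrt_nonneg _)
  have hu0sq : u0 ^ 2 = ‖z - x‖ ^ 2 / A := by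
    rw [hu0, div_pow, Real.sq_sqrt hApos.le]
  set c := Real.sqrt (2 * (n : ℝ) / ((n : ℝ) + 1)) with hc
  have hcnn : 0 ≤ c := Real.sqrt_nonneg _
  have hcs_sq : (c * s) ^ 2 = 2 * (n : ℝ) / ((n : ℝ) + 1) * s ^ 2 := by
    rw [mul_pow, hc, Real.sq_sqrt (by positivity)]
  have hrle : r ≤ Real.sqrt (1 + (c * s) ^ 2) := by
    rw [hr]
    apply Real.sqrt_le_sqrt
    rw [hcs_sq]
    calc q ≤ 1 + 2 * s ^ 2 * (n : ℝ) / ((n : ℝ) + 1) := hqle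
      _ = 1 + 2 * (n : ℝ) / ((n : ℝ) + 1) * s ^ 2 := by ring
  have hkey2 : 1 + 2 * u0 ^ 2 ≤ Real.sqrt (1 + (c * s) ^ 2) := by
    rw [hu0sq]
    have hmda : 2 * ‖z - x‖ ^ 2 / A = 2 * (‖z - x‖ ^ 2 / A) := mul_div_assoc 2 _ _
    linarith [hineq, hrle]
  have hcs_nn : 0 ≤ c * s := mul_nonneg hcnn hs0
  have hsq2 : (1 + 2 * u0 ^ 2) ^ 2 ≤ 1 + (c * s) ^ 2 := by
    have h1 : (0 : ℝ) ≤ 1 + 2 * u0 ^ 2 := by positivity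
    have h2 := Real.sq_sqrt (by positivity : (0 : ℝ) ≤ 1 + (c * s) ^ 2)
    nlinarith [hkey2]
  have hfin : 2 * u0 * Real.sqrt (1 + u0 ^ 2) ≤ c * s := by
    have hlhs_nn : 0 ≤ 2 * u0 * Real.sqrt (1 + u0 ^ 2) := by positivity
    have hlhs_sq : (2 * u0 * Real.sqrt (1 + u0 ^ 2)) ^ 2 = 4 * u0 ^ 2 * (1 + u0 ^ 2) := by
      rw [mul_pow, mul_pow, Real.sq_sqrt (by positivity)]
      ring
    nlinarith [hlhs_sq, hsq2, hcs_nn]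
  calc 2 * Real.arsinh u0 = Real.arsinh (Real.sinh (2 * Real.arsinh u0)) :=
        (Real.arsinh_sinh _).symm
    _ ≤ Real.arsinh (c * s) := by
        apply Real.arsinh_le_arsinh.mpr
        rw [Real.sinh_two_mul, Real.sinh_arsinh, Real.cosh_arsinh]
        exact hfin

end DeksterAux
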